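/- For each (x,y) ∈ ℝ² there exists a unique pair (u,v) ∈ ℝ² satisfying v² + y² = (x² + u²)², vu + yx = 0, vx − yu ≥ 0. -/
import Mathlib

/-- If `a, b ≥ 0` satisfy the same monic quadratic relation `T^2 + c*T = const`
with `c ≥ 0`, they are equal. -/
lemma harvey_lawson_quad_inj {a b c : ℝ} (ha : 0 ≤ a) (hb : 0 ≤ b) (hc : 0 ≤ c)
    (h : a ^ 2 + c * a = b ^ 2 + c * b) : a = b := by
  have hf : (a - b) * (a + b + c) = 0 := by linear_combination h
  rcases mul_eq_zero.mp hf with h' | h'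
  · linarith
  · linarith

theorem harvey_lawson_graph (x y : ℝ) :
    ∃! p : ℝ × ℝ,
      p.2 ^ 2 + y ^ 2 = (x ^ 2 + p.1 ^ 2) ^ 2 ∧
      p.2 * p.1 + y * x = 0 ∧
      p.2 * x - y * p.1 ≥ 0 := by
  have h4 : (0:ℝ) ≤ x ^ 4 + 4 * y ^ 2 := by positivity
  set D := Real.sqrt (x ^ 4 + 4 * y ^ 2) with hDdef
  have hD2 : D ^ 2 = x ^ 4 + 4 * y ^ 2 := Real.sq_sqrt h4
  have hD0 : 0 ≤ D := Real.sqrt_nonneg _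
  have hx2D : x ^ 2 ≤ D := by
    have h1 : Real.sqrt ((x ^ 2) ^ 2) ≤ D := by
      apply Real.sqrt_le_sqrt
      have : (x ^ 2) ^ 2 = x ^ 4 := by ring
      rw [this]
      linarith [sq_nonneg y]
    rwa [Real.sqrt_sq (sq_nonneg x)] at h1
  set t := (D - x ^ 2) / 2 with htdef
  have ht0 : 0 ≤ t := by rw [htdef]; linarith
  have hkey : t ^ 2 + x ^ 2 * t = y ^ 2 := by
    rw [htdef]; linear_combination hD2 / 4
  set st := Real.sqrt t with hstdef
  set ss := Real.sqrt (x ^ 2 + t) with hssdef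
  have hst0 : 0 ≤ st := Real.sqrt_nonneg _
  have hss0 : 0 ≤ ss := Real.sqrt_nonneg _
  have hst2 : st ^ 2 = t := Real.sq_sqrt ht0
  have hss2 : ss ^ 2 = x ^ 2 + t := Real.sq_sqrt (by positivity)
  have hmul : st * ss = |y| := by
    rw [hstdef, hssdef, ← Real.sqrt_mul ht0]
    rw [show t * (x ^ 2 + t) = y ^ 2 by linear_combination hkey]
    exact Real.sqrt_sq_eq_abs y
  set u0 : ℝ := if 0 ≤ y then -st else st with hu0def
  set v0 : ℝ := x * ss with hv0def
  have hu0sq : u0 ^ 2 = t := by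
    rw [hu0def]; split_ifs <;> [rw [neg_pow]; skip] <;> simp [hst2]
  have hkey2 : u0 * ss = -y := by
    rw [hu0def]; split_ifs with h
    · rw [neg_mul, hmul, abs_of_nonneg h]
    · rw [hmul, abs_of_neg (lt_of_not_ge h)]
  clear_value D t st ss u0 v0
  refine ⟨(u0, v0), ⟨?_, ?_, ?_⟩, ?_⟩
  · show v0 ^ 2 + y ^ 2 = (x ^ 2 + u0 ^ 2) ^ 2
    rw [hv0def]
    linear_combination x ^ 2 * hss2 - hkey - (2 * x ^ 2 + u0 ^ 2 + t) * hu0sq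
  · show v0 * u0 + y * x = 0
    rw [hv0def]
    linear_combination x * hkey2
  · show v0 * x - y * u0 ≥ 0
    rw [hv0def, hu0def]
    split_ifs with h
    · have h1 : 0 ≤ y * st := mul_nonneg h hst0
      have h2 : 0 ≤ x ^ 2 * ss := mul_nonneg (sq_nonneg x) hss0
      have h3 : x * ss * x - y * -st = x ^ 2 * ss + y * st := by ring
      rw [h3]; linarith
    · have h1 : 0 ≤ (-y) * st := mul_nonneg (by linarith [lt_of_not_ge h]) hst0
      have h2 : 0 ≤ x ^ 2 * ss := mul_nonneg (sq_nonneg x) hss0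
      have h3 : x * ss * x - y * st = x ^ 2 * ss + (-y) * st := by ring
      rw [h3]; linarith
  · rintro ⟨u, v⟩ ⟨h1, h2, h3⟩
    dsimp only at h1 h2 h3
    set s := Real.sqrt (x ^ 2 + u ^ 2) with hsdef
    have hs0 : 0 ≤ s := Real.sqrt_nonneg _
    have hs2 : s ^ 2 = x ^ 2 + u ^ 2 := Real.sq_sqrt (by positivity)
    have hA : (v * x - y * u) ^ 2 = (x ^ 2 + u ^ 2) ^ 3 := by
      linear_combination (x ^ 2 + u ^ 2) * h1 - (v * u + y * x) * h2
    have hcb : (v * x - y * u) ^ 2 = (s ^ 3) ^ 2 := by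
      rw [hA, ← hs2]; ring
    have hB : v * x - y * u = s ^ 3 := by
      calc v * x - y * u = Real.sqrt ((v * x - y * u) ^ 2) := (Real.sqrt_sq h3).symm
        _ = Real.sqrt ((s ^ 3) ^ 2) := by rw [hcb]
        _ = s ^ 3 := Real.sqrt_sq (pow_nonneg hs0 3)
    have hv : v * (x ^ 2 + u ^ 2) = x * (v * x - y * u) := by
      linear_combination u * h2
    have hy' : y * (x ^ 2 + u ^ 2) = -u * (v * x - y * u) := by
      linear_combination x * h2
    rcases eq_or_lt_of_le hs0 with hs | hslt
    · -- degenerate case: s = 0, so x = u = 0, then v = y = 0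
      have hxu : x ^ 2 + u ^ 2 = 0 := by rw [← hs2, ← hs]; ring
      have hsq := (add_eq_zero_iff_of_nonneg (sq_nonneg x) (sq_nonneg u)).mp hxu
      have hx0 : x = 0 := by
        have := hsq.1; exact pow_eq_zero_iff (two_ne_zero).elim |>.mp this
      have hu0' : u = 0 := by
        have := hsq.2; exact pow_eq_zero_iff (two_ne_zero).elim |>.mp this
      have hvy : v ^ 2 + y ^ 2 = 0 := by
        rw [hxu] at h1; simpa using h1
      have hsq2 := (add_eq_zero_iff_of_nonneg (sq_nonneg v) (sq_nonneg y)).mp hvy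
      have hv0' : v = 0 := by
        have := hsq2.1; exact pow_eq_zero_iff (two_ne_zero).elim |>.mp this
      have hy0 : y = 0 := by
        have := hsq2.2; exact pow_eq_zero_iff (two_ne_zero).elim |>.mp this
      have ht0' : t = 0 := by
        have h' : t ^ 2 + x ^ 2 * t = 0 := by rw [hkey, hy0]; ring
        have h'' : t ^ 2 = 0 ∧ x ^ 2 * t = 0 :=
          (add_eq_zero_iff_of_nonneg (sq_nonneg t) (mul_nonneg (sq_nonneg x) ht0)).mp h'
        exact pow_eq_zero_iff (two_ne_zero).elim |>.mp h''.1
      have hst0' : st = 0 := by rw [hstdef, ht0', Real.sqrt_zero]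
      have hU : u0 = 0 := by rw [hu0def]; split_ifs <;> simp [hst0']
      have hV : v0 = 0 := by rw [hv0def, hx0]; ring
      rw [Prod.mk.injEq]
      exact ⟨by rw [hu0', hU], by rw [hv0', hV]⟩
    · -- main case: s > 0
      have hvv : v = x * s := by
        have h : v * s ^ 2 = (x * s) * s ^ 2 := by
          linear_combination hv + v * hs2 + x * hB
        exact mul_right_cancel₀ (by positivity) h
      have hyy : y = -(u * s) := by
        have h : y * s ^ 2 = (-(u * s)) * s ^ 2 := by
          linear_combination hy' + y * hs2 - u * hB
        exact mul_right_cancel₀ (by positivity) h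
      have hu2 : u ^ 2 * (x ^ 2 + u ^ 2) = y ^ 2 := by
        linear_combination (u * s - y) * hyy - u ^ 2 * hs2
      have hu2t : u ^ 2 = t := by
        apply harvey_lawson_quad_inj (sq_nonneg u) ht0 (sq_nonneg x)
        linear_combination hu2 - hkey
      have hstu : st = |u| := by
        rw [hstdef, ← hu2t, Real.sqrt_sq_eq_abs]
      have hsss : ss = s := by rw [hssdef, hsdef, hu2t]
      rw [Prod.mk.injEq]
      constructor
      · rw [hu0def, hstu]
        split_ifs with h
        · have hus : 0 ≤ -(u * s) := by rw [← hyy]; exact h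
          have hu_le : u ≤ 0 := by
            by_contra hc
            push_neg at hc
            have := mul_pos hc hslt
            linarith
          rw [abs_of_nonpos hu_le]; ring
        · have h' := lt_of_not_ge h
          have hus : u * s > 0 := by linarith [hyy]
          have hu_pos : 0 < u := by
            rcases lt_or_ge 0 u with h'' | h''
            · exact h''
            · exfalso
              have : u * s ≤ 0 := mul_nonpos_iff.mpr (Or.inr ⟨h'', hslt.le⟩)
              linarith
          rw [abs_of_pos hu_pos]
      · rw [hv0def, hsss, hvv]
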